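/- arXiv:1510.05320 — 4 statements merged into one kernel-verified Lean document; each statement's English description precedes it below -/
import Mathlib

section
/- The image of the map Q_s : S⁶ → ℝ³ defined by Q_s(a,c) = (|a|, Re a, ⟨Im a, Im c⟩) on the unit sphere S⁶ ⊂ ℍ ⊕ Im ℍ is exactly {(x,y,z) : 0 ≤ x ≤ 1, −x ≤ y ≤ x, z² ≤ (x² − y²)(1 − x²)}. -/
open Quaternion

lemma normq (a : ℍ) : ‖a‖^2 = a.re^2 + a.imI^2 + a.imJ^2 + a.imK^2 := by
  rw [pow_two, ← Quaternion.normSq_eq_norm_mul_self, Quaternion.normSq_def']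

lemma innerq (a c : ℍ) : (inner ℝ a.im c.im : ℝ) = a.imI*c.imI + a.imJ*c.imJ + a.imK*c.imK := by
  simp [Quaternion.inner_def, Quaternion.re_mul]; ring

lemma sqeq {a b : ℝ} (ha : 0 ≤ a) (hb : 0 ≤ b) (h : a^2 = b^2) : a = b := by
  nlinarith [sq_nonneg (a - b), sq_nonneg (a + b)]

set_option maxHeartbeats 1000000 in
theorem stmt_1 :
    {p : ℝ × ℝ × ℝ | ∃ a c : ℍ, c.re = 0 ∧ ‖a‖ ^ 2 + ‖c‖ ^ 2 = 1 ∧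
      p = (‖a‖, a.re, (inner ℝ a.im c.im : ℝ))} =
    {p : ℝ × ℝ × ℝ | 0 ≤ p.1 ∧ p.1 ≤ 1 ∧ -p.1 ≤ p.2.1 ∧ p.2.1 ≤ p.1 ∧
      p.2.2 ^ 2 ≤ (p.1 ^ 2 - p.2.1 ^ 2) * (1 - p.1 ^ 2)} := by
  ext ⟨x, y, z⟩
  simp only [Set.mem_setOf_eq, Prod.mk.injEq]
  constructor
  · rintro ⟨a, c, hc, hn, hx, hy, hz⟩
    subst hx hy hz
    have hna := normq a
    have hnc := normq c
    have hcs : (inner ℝ a.im c.im : ℝ)^2 ≤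
        (a.imI^2 + a.imJ^2 + a.imK^2) * (c.imI^2 + c.imJ^2 + c.imK^2) := by
      rw [innerq]
      nlinarith [sq_nonneg (a.imI*c.imJ - a.imJ*c.imI),
        sq_nonneg (a.imI*c.imK - a.imK*c.imI), sq_nonneg (a.imJ*c.imK - a.imK*c.imJ)]
    have h0 : (0:ℝ) ≤ ‖a‖ := norm_nonneg a
    have h0c : (0:ℝ) ≤ ‖c‖ := norm_nonneg c
    refine ⟨h0, ?_, ?_, ?_, ?_⟩
    · nlinarith [sq_nonneg ‖c‖]
    · nlinarith [sq_nonneg (a.imI), sq_nonneg a.imJ, sq_nonneg a.imK, sq_nonneg (‖a‖ + a.re)]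
    · nlinarith [sq_nonneg (a.imI), sq_nonneg a.imJ, sq_nonneg a.imK, sq_nonneg (‖a‖ - a.re)]
    · rw [hc] at hnc
      nlinarith [hcs]
  · rintro ⟨hx, hx1, hy1, hy2, hz⟩
    have hxy : (0:ℝ) ≤ x^2 - y^2 := by nlinarith
    have hx2 : (0:ℝ) ≤ 1 - x^2 := by nlinarith
    set s := Real.sqrt (x^2 - y^2) with hs
    have hs2 : s^2 = x^2 - y^2 := Real.sq_sqrt hxy
    have hsn : 0 ≤ s := Real.sqrt_nonneg _
    set t := Real.sqrt (1 - x^2) with ht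
    have ht2 : t^2 = 1 - x^2 := Real.sq_sqrt hx2
    have htn : 0 ≤ t := Real.sqrt_nonneg _
    by_cases hs0 : s = 0
    · -- then z = 0
      have hz0 : z = 0 := by
        have : x^2 - y^2 = 0 := by rw [← hs2, hs0]; ring
        nlinarith
      refine ⟨⟨y, s, 0, 0⟩, ⟨0, 0, t, 0⟩, rfl, ?_, ?_, ?_, ?_⟩
      · erw [normq, normq]; simp; nlinarith
      · refine (sqeq (norm_nonneg _) hx ?_).symm
        erw [normq]; simp; nlinarith
      · rfl
      · erw [innerq, hz0]; simp [hs0]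
    · have hsp : 0 < s := lt_of_le_of_ne hsn (Ne.symm hs0)
      obtain ⟨c1, hc1⟩ : ∃ c1 : ℝ, c1 * s = z := ⟨z/s, by field_simp⟩
      have hzz : z^2 = c1^2 * s^2 := by rw [← hc1]; ring
      have hc2 : (0:ℝ) ≤ t^2 - c1^2 := by nlinarith [hz, hzz, mul_pos hsp hsp]
      set w := Real.sqrt (t^2 - c1^2) with hw
      have hw2 : w^2 = t^2 - c1^2 := Real.sq_sqrt hc2
      refine ⟨⟨y, s, 0, 0⟩, ⟨0, c1, w, 0⟩, rfl, ?_, ?_, ?_, ?_⟩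
      · erw [normq, normq]; simp; nlinarith
      · refine (sqeq (norm_nonneg _) hx ?_).symm
        erw [normq]; simp; nlinarith
      · rfl
      · erw [innerq]; simp; linarith [hc1, mul_comm s c1]
end

section
/- If two points (a₁,c₁), (a₂,c₂) of the unit sphere in ℍ ⊕ Im ℍ satisfy Q_s(a₁,c₁) = Q_s(a₂,c₂), where Q_s(a,c) = (|a|, Re a, ⟨Im a, Im c⟩), then there exists a quaternion algebra automorphism g of ℍ with (g(a₁), g(c₁)) = (a₂, c₂). -/
open Quaternion

noncomputable def conjAut (q : ℍ) (hq : q ≠ 0) : ℍ ≃ₐ[ℝ] ℍ where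
  toFun x := q * x * q⁻¹
  invFun x := q⁻¹ * x * q
  left_inv x := by
    simp [mul_assoc, inv_mul_cancel_left₀ hq, mul_inv_cancel_left₀ hq,
      inv_mul_cancel₀ hq, mul_inv_cancel₀ hq]
  right_inv x := by
    simp [mul_assoc, inv_mul_cancel_left₀ hq, mul_inv_cancel_left₀ hq,
      inv_mul_cancel₀ hq, mul_inv_cancel₀ hq]
  map_mul' x y := by
    simp [mul_assoc, inv_mul_cancel_left₀ hq]
  map_add' x y := by
    simp [mul_add, add_mul]
  commutes' r := by
    simp only [Algebra.algebraMap_eq_smul_one]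
    rw [mul_smul_comm, mul_one, smul_mul_assoc, mul_inv_cancel₀ hq]

lemma conjAut_apply (q : ℍ) (hq : q ≠ 0) (x : ℍ) : conjAut q hq x = q * x * q⁻¹ := rfl

lemma re_mul_comm (a b : ℍ) : (a * b).re = (b * a).re := by
  rw [Quaternion.re_mul, Quaternion.re_mul]; ring

def qmk (a b c d : ℝ) : ℍ := ⟨a, b, c, d⟩

@[simp] lemma qmk_re (a b c d : ℝ) : (qmk a b c d).re = a := rfl
@[simp] lemma qmk_imI (a b c d : ℝ) : (qmk a b c d).imI = b := rfl
@[simp] lemma qmk_imJ (a b c d : ℝ) : (qmk a b c d).imJ = c := rfl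
@[simp] lemma qmk_imK (a b c d : ℝ) : (qmk a b c d).imK = d := rfl

noncomputable def qI : ℍ := qmk 0 1 0 0

lemma lemA (u₁ u₂ : ℍ) (h₁ : u₁.re = 0) (h₂ : u₂.re = 0)
    (hn : normSq u₁ = normSq u₂) : ∃ q : ℍ, q ≠ 0 ∧ q * u₁ = u₂ * q := by
  rw [Quaternion.normSq_def', Quaternion.normSq_def'] at hn
  by_cases hz : u₂ + u₁ = 0
  · have hu2 : u₂ = -u₁ := eq_neg_of_add_eq_zero_left hz
    by_cases hxy : u₁.imI = 0 ∧ u₁.imJ = 0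
    · refine ⟨qmk 0 1 0 0, ?_, ?_⟩
      · intro h
        have := congrArg QuaternionAlgebra.imI h
        simp at this
      · ext <;> simp [Quaternion.re_mul, Quaternion.imI_mul, Quaternion.imJ_mul,
          Quaternion.imK_mul, h₁, hu2, hxy.1, hxy.2]
    · refine ⟨qmk 0 u₁.imJ (-u₁.imI) 0, ?_, ?_⟩
      · intro h
        rcases not_and_or.mp hxy with h' | h'
        · have := congrArg QuaternionAlgebra.imJ h
          simp at this
          exact h' (by linarith)
        · have := congrArg QuaternionAlgebra.imI h
          simp at this
          exact h' this
      · ext <;> simp [Quaternion.re_mul, Quaternion.imI_mul, Quaternion.imJ_mul,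
          Quaternion.imK_mul, h₁, hu2] <;> ring
  · have e₁ : u₁.re ^ 2 = 0 := by rw [h₁]; ring
    have e₂ : u₂.re ^ 2 = 0 := by rw [h₂]; ring
    refine ⟨u₂ + u₁, hz, ?_⟩
    ext <;> simp [Quaternion.re_mul, Quaternion.imI_mul, Quaternion.imJ_mul,
      Quaternion.imK_mul, Quaternion.re_add, Quaternion.imI_add, Quaternion.imJ_add,
      Quaternion.imK_add, h₁, h₂] <;> linarith

lemma lemB (p p' : ℍ) (h1 : p.re = 0) (h2 : p'.re = 0) (hI : p.imI = p'.imI)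
    (hn : normSq p = normSq p') :
    ∃ q : ℍ, q ≠ 0 ∧ q * qI = qI * q ∧ q * p = p' * q := by
  rw [Quaternion.normSq_def', Quaternion.normSq_def'] at hn
  have h : p.imJ ^ 2 + p.imK ^ 2 = p'.imJ ^ 2 + p'.imK ^ 2 := by
    have e₁ : p.re ^ 2 = 0 := by rw [h1]; ring
    have e₂ : p'.re ^ 2 = 0 := by rw [h2]; ring
    linear_combination hn - e₁ + e₂ - (p.imI + p'.imI) * hI
  by_cases hA : p.imJ^2 + p.imK^2 + (p.imJ*p'.imJ + p.imK*p'.imK) = 0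
  · have key : (p.imJ + p'.imJ)^2 + (p.imK + p'.imK)^2 = 0 := by
      linear_combination 2 * hA - h
    have hy' : p'.imJ = -p.imJ := by
      nlinarith [sq_nonneg (p.imJ + p'.imJ), sq_nonneg (p.imK + p'.imK)]
    have hz' : p'.imK = -p.imK := by
      nlinarith [sq_nonneg (p.imJ + p'.imJ), sq_nonneg (p.imK + p'.imK)]
    refine ⟨qI, ?_, rfl, ?_⟩
    · intro hq; have := congrArg QuaternionAlgebra.imI hq; simp [qI] at this
    · ext <;> simp [Quaternion.re_mul, Quaternion.imI_mul, Quaternion.imJ_mul,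
        Quaternion.imK_mul, h1, h2, ← hI, hy', hz', qI]
  · refine ⟨qmk (p.imJ^2 + p.imK^2 + (p.imJ*p'.imJ + p.imK*p'.imK))
        (-(p.imK*p'.imJ - p.imJ*p'.imK)) 0 0, ?_, ?_, ?_⟩
    · intro hq; have := congrArg QuaternionAlgebra.re hq; simp at this; exact hA this
    · ext <;> simp [Quaternion.re_mul, Quaternion.imI_mul, Quaternion.imJ_mul,
        Quaternion.imK_mul, qI]
    · ext
      · simp [Quaternion.re_mul, Quaternion.imI_mul, Quaternion.imJ_mul,
          Quaternion.imK_mul, h1, h2, ← hI]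
        ring
      · simp [Quaternion.re_mul, Quaternion.imI_mul, Quaternion.imJ_mul,
          Quaternion.imK_mul, h1, h2, ← hI]
        ring
      · simp [Quaternion.re_mul, Quaternion.imI_mul, Quaternion.imJ_mul,
          Quaternion.imK_mul, h1, h2, ← hI]
        linear_combination p.imJ * h
      · simp [Quaternion.re_mul, Quaternion.imI_mul, Quaternion.imJ_mul,
          Quaternion.imK_mul, h1, h2, ← hI]
        linear_combination p.imK * h

lemma core (u₁ v₁ u₂ v₂ : ℍ) (hu₁ : u₁.re = 0) (hv₁ : v₁.re = 0)
    (hu₂ : u₂.re = 0) (hv₂ : v₂.re = 0)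
    (hnu : normSq u₁ = normSq u₂) (hnv : normSq v₁ = normSq v₂)
    (hin : (u₁ * v₁).re = (u₂ * v₂).re) :
    ∃ q : ℍ, q ≠ 0 ∧ q * u₁ = u₂ * q ∧ q * v₁ = v₂ * q := by
  by_cases hz : u₁ = 0
  · have hz2 : u₂ = 0 := by
      rw [← Quaternion.normSq_eq_zero, ← hnu, hz, map_zero]
    obtain ⟨q, hq, hqv⟩ := lemA v₁ v₂ hv₁ hv₂ hnv
    exact ⟨q, hq, by simp [hz, hz2], hqv⟩
  · obtain ⟨s, hs⟩ : ∃ x : ℝ, x = Real.sqrt (normSq u₁) := ⟨_, rfl⟩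
    have hsq : s ^ 2 = normSq u₁ := by rw [hs]; exact Real.sq_sqrt normSq_nonneg
    have hs0 : s ≠ 0 := by
      intro h0
      apply hz
      rw [← Quaternion.normSq_eq_zero, ← hsq, h0]
      ring
    obtain ⟨w, hw⟩ : ∃ x : ℍ, x = qmk 0 s 0 0 := ⟨_, rfl⟩
    have hwre : w.re = 0 := by rw [hw, qmk_re]
    have hnw : normSq w = s ^ 2 := by
      rw [hw, Quaternion.normSq_def']
      norm_num
    have hnw₁ : normSq u₁ = normSq w := by rw [hnw, hsq]
    obtain ⟨qa, hqa, hha⟩ := lemA u₁ w hu₁ hwre hnw₁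
    obtain ⟨qb, hqb, hhb⟩ := lemA u₂ w hu₂ hwre (hnu ▸ hnw₁)
    obtain ⟨v₁', hv₁'⟩ : ∃ x : ℍ, x = qa * v₁ * qa⁻¹ := ⟨_, rfl⟩
    obtain ⟨v₂', hv₂'⟩ : ∃ x : ℍ, x = qb * v₂ * qb⁻¹ := ⟨_, rfl⟩
    have va : v₁' * qa = qa * v₁ := by rw [hv₁', inv_mul_cancel_right₀ hqa]
    have vb : v₂' * qb = qb * v₂ := by rw [hv₂', inv_mul_cancel_right₀ hqb]
    have hre₁ : v₁'.re = v₁.re := by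
      rw [hv₁', re_mul_comm, ← mul_assoc, inv_mul_cancel₀ hqa, one_mul]
    have hre₂ : v₂'.re = v₂.re := by
      rw [hv₂', re_mul_comm, ← mul_assoc, inv_mul_cancel₀ hqb, one_mul]
    have hn₁ : normSq v₁' = normSq v₁ := by
      have h := congrArg normSq va
      rw [map_mul, map_mul, mul_comm (normSq qa)] at h
      exact mul_right_cancel₀ (normSq_ne_zero.mpr hqa) h
    have hn₂ : normSq v₂' = normSq v₂ := by
      have h := congrArg normSq vb
      rw [map_mul, map_mul, mul_comm (normSq qb)] at h
      exact mul_right_cancel₀ (normSq_ne_zero.mpr hqb) h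
    have hwv₁ : (w * v₁').re = (u₁ * v₁).re := by
      have e : w * v₁' = qa * (u₁ * v₁) * qa⁻¹ := by
        rw [hv₁']
        simp only [← mul_assoc]
        rw [← hha]
      rw [e, re_mul_comm, ← mul_assoc, ← mul_assoc, inv_mul_cancel₀ hqa, one_mul]
    have hwv₂ : (w * v₂').re = (u₂ * v₂).re := by
      have e : w * v₂' = qb * (u₂ * v₂) * qb⁻¹ := by
        rw [hv₂']
        simp only [← mul_assoc]
        rw [← hhb]
      rw [e, re_mul_comm, ← mul_assoc, ← mul_assoc, inv_mul_cancel₀ hqb, one_mul]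
    have hImeq : v₁'.imI = v₂'.imI := by
      have h1 : (w * v₁').re = -s * v₁'.imI := by
        rw [Quaternion.re_mul, hw]
        norm_num
      have h2 : (w * v₂').re = -s * v₂'.imI := by
        rw [Quaternion.re_mul, hw]
        norm_num
      have h3 : -s * v₁'.imI = -s * v₂'.imI := by
        rw [← h1, ← h2, hwv₁, hwv₂, hin]
      exact mul_left_cancel₀ (neg_ne_zero.mpr hs0) h3
    obtain ⟨qc, hqc, hci, hcv⟩ := lemB v₁' v₂' (hre₁.trans hv₁) (hre₂.trans hv₂)
      hImeq (hn₁.trans (hnv.trans hn₂.symm))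
    have hwqI : w = (s : ℝ) • qI := by
      rw [hw]
      ext <;> simp [qI]
    have hcw : qc * w = w * qc := by
      rw [hwqI, mul_smul_comm, smul_mul_assoc, hci]
    have hb' : qb⁻¹ * w = u₂ * qb⁻¹ := by
      have h1 : qb * (u₂ * qb⁻¹) = w := by
        rw [← mul_assoc, hhb, mul_inv_cancel_right₀ hqb]
      rw [← h1, inv_mul_cancel_left₀ hqb]
    have vb' : qb⁻¹ * v₂' = v₂ * qb⁻¹ := by
      have h1 : qb * (v₂ * qb⁻¹) = v₂' := by
        rw [← mul_assoc, hv₂']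
      rw [← h1, inv_mul_cancel_left₀ hqb]
    refine ⟨qb⁻¹ * (qc * qa),
      mul_ne_zero (inv_ne_zero hqb) (mul_ne_zero hqc hqa), ?_, ?_⟩
    · calc (qb⁻¹ * (qc * qa)) * u₁ = qb⁻¹ * (qc * (qa * u₁)) := by
            simp only [mul_assoc]
        _ = qb⁻¹ * (qc * (w * qa)) := by rw [hha]
        _ = qb⁻¹ * ((qc * w) * qa) := by rw [mul_assoc]
        _ = qb⁻¹ * ((w * qc) * qa) := by rw [hcw]
        _ = (qb⁻¹ * w) * (qc * qa) := by simp only [mul_assoc]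
        _ = (u₂ * qb⁻¹) * (qc * qa) := by rw [hb']
        _ = u₂ * (qb⁻¹ * (qc * qa)) := by simp only [mul_assoc]
    · calc (qb⁻¹ * (qc * qa)) * v₁ = qb⁻¹ * (qc * (qa * v₁)) := by
            simp only [mul_assoc]
        _ = qb⁻¹ * (qc * (v₁' * qa)) := by rw [va]
        _ = qb⁻¹ * ((qc * v₁') * qa) := by rw [mul_assoc]
        _ = qb⁻¹ * ((v₂' * qc) * qa) := by rw [hcv]
        _ = (qb⁻¹ * v₂') * (qc * qa) := by simp only [mul_assoc]
        _ = (v₂ * qb⁻¹) * (qc * qa) := by rw [vb']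
        _ = v₂ * (qb⁻¹ * (qc * qa)) := by simp only [mul_assoc]

theorem stmt_3 (a₁ c₁ a₂ c₂ : ℍ)
    (hc₁ : c₁.re = 0) (hc₂ : c₂.re = 0)
    (h1 : ‖a₁‖ ^ 2 + ‖c₁‖ ^ 2 = 1) (h2 : ‖a₂‖ ^ 2 + ‖c₂‖ ^ 2 = 1)
    (ha : ‖a₁‖ = ‖a₂‖) (hre : a₁.re = a₂.re)
    (hinner : (inner ℝ a₁.im c₁.im : ℝ) = inner ℝ a₂.im c₂.im) :
    ∃ g : ℍ ≃ₐ[ℝ] ℍ, g a₁ = a₂ ∧ g c₁ = c₂ := by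
  have hc₁im : c₁.im = c₁ := by
    conv_rhs => rw [← c₁.re_add_im]
    rw [hc₁]; simp
  have hc₂im : c₂.im = c₂ := by
    conv_rhs => rw [← c₂.re_add_im]
    rw [hc₂]; simp
  have hstar₁ : star c₁.im = -c₁.im := by
    ext <;> simp [hc₁]
  have hstar₂ : star c₂.im = -c₂.im := by
    ext <;> simp [hc₂]
  rw [Quaternion.inner_def, Quaternion.inner_def, hstar₁, hstar₂] at hinner
  have hin : (a₁.im * c₁).re = (a₂.im * c₂).re := by
    rw [← hc₁im, ← hc₂im]
    have := hinner
    simp only [mul_neg, Quaternion.re_neg] at this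
    linarith
  have hna : normSq a₁ = normSq a₂ := by
    rw [normSq_eq_norm_mul_self, normSq_eq_norm_mul_self, ha]
  have hre2 : a₁.re ^ 2 = a₂.re ^ 2 := by rw [hre]
  have hnu : normSq a₁.im = normSq a₂.im := by
    rw [Quaternion.normSq_def', Quaternion.normSq_def'] at hna ⊢
    simp only [Quaternion.re_im, Quaternion.imI_im, Quaternion.imJ_im,
      Quaternion.imK_im] at *
    nlinarith [hre2, hna]
  have hnc2 : ‖c₁‖ ^ 2 = ‖c₂‖ ^ 2 := by rw [← ha] at h2; linarith
  have hnv : normSq c₁ = normSq c₂ := by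
    rw [normSq_eq_norm_mul_self, normSq_eq_norm_mul_self, ← pow_two, ← pow_two, hnc2]
  obtain ⟨q, hq, hqu, hqv⟩ := core a₁.im c₁ a₂.im c₂ a₁.re_im hc₁ a₂.re_im hc₂ hnu hnv hin
  refine ⟨conjAut q hq, ?_, ?_⟩
  · rw [conjAut_apply]
    conv_lhs => rw [← a₁.re_add_im]
    rw [mul_add, add_mul, hqu]
    rw [mul_inv_cancel_right₀ hq]
    have hcoe : q * (a₁.re : ℍ) * q⁻¹ = (a₁.re : ℍ) := by
      rw [← Quaternion.coe_commutes, mul_inv_cancel_right₀ hq]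
    rw [hcoe, hre, a₂.re_add_im]
  · rw [conjAut_apply, hqv, mul_inv_cancel_right₀ hq]
end

section
/- Suppose u₁, u₂ ∈ ℍ and purely imaginary unit quaternions q₁, q₂ satisfy |u₁| = |u₂|, Re(u₁) = Re(u₂), and ⟨Im u₁, q₁⟩ = ⟨Im u₂, q₂⟩. Then there exists an algebra automorphism g of ℍ with g(u₁) = u₂ and g(q₁) = q₂. -/
open Quaternion

noncomputable section

namespace Stmt14Aux

lemma inner_comp (a b : ℍ) :
    (inner ℝ a b : ℝ) = a.re*b.re + a.imI*b.imI + a.imJ*b.imJ + a.imK*b.imK := by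
  rw [Quaternion.inner_def]; simp [Quaternion.re_mul]

lemma norm_eq_one (a : ℍ) (h : a.re^2 + a.imI^2 + a.imJ^2 + a.imK^2 = 1) : ‖a‖ = 1 := by
  have h2 : normSq a = ‖a‖ * ‖a‖ := normSq_eq_norm_mul_self a
  rw [Quaternion.normSq_def'] at h2
  nlinarith [norm_nonneg a]

lemma sq_sum_of_norm_one {a : ℍ} (h : ‖a‖ = 1) :
    a.re^2 + a.imI^2 + a.imJ^2 + a.imK^2 = 1 := by
  have h2 : normSq a = ‖a‖ * ‖a‖ := normSq_eq_norm_mul_self a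
  rw [Quaternion.normSq_def'] at h2
  nlinarith

/-- an orthonormal pair of imaginary quaternions gives a quaternionic basis. -/
def basisOf (p e : ℍ) (hp : p.re = 0) (he : e.re = 0) (hpn : ‖p‖ = 1) (hen : ‖e‖ = 1)
    (hpe : (inner ℝ p e : ℝ) = 0) : QuaternionAlgebra.Basis ℍ (-1 : ℝ) (0 : ℝ) (-1 : ℝ) where
  i := p
  j := e
  k := p * e
  i_mul_i := by
    have := sq_sum_of_norm_one hpn
    ext <;> simp [Quaternion.re_mul, hp] <;> nlinarith
  j_mul_j := by
    have := sq_sum_of_norm_one hen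
    ext <;> simp [Quaternion.re_mul, he] <;> nlinarith
  i_mul_j := rfl
  j_mul_i := by
    rw [inner_comp, hp, he] at hpe
    ext <;> simp [Quaternion.re_mul, hp, he] <;> nlinarith

/-- the lift as a map ℍ → ℍ. -/
def liftH (p e : ℍ) (hp : p.re = 0) (he : e.re = 0) (hpn : ‖p‖ = 1) (hen : ‖e‖ = 1)
    (hpe : (inner ℝ p e : ℝ) = 0) : ℍ →ₐ[ℝ] ℍ :=
  (basisOf p e hp he hpn hen hpe).liftHom

/-- the corresponding algebra automorphism of ℍ. -/
def autOf (p e : ℍ) (hp : p.re = 0) (he : e.re = 0) (hpn : ‖p‖ = 1) (hen : ‖e‖ = 1)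
    (hpe : (inner ℝ p e : ℝ) = 0) : ℍ ≃ₐ[ℝ] ℍ :=
  AlgEquiv.ofBijective (liftH p e hp he hpn hen hpe)
    ⟨(liftH p e hp he hpn hen hpe).toRingHom.injective,
     (LinearMap.injective_iff_surjective
        (f := (liftH p e hp he hpn hen hpe).toLinearMap)).mp
        (liftH p e hp he hpn hen hpe).toRingHom.injective⟩

lemma autOf_mk (p e : ℍ) (hp : p.re = 0) (he : e.re = 0) (hpn : ‖p‖ = 1) (hen : ‖e‖ = 1)
    (hpe : (inner ℝ p e : ℝ) = 0) (r a b d : ℝ) :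
    autOf p e hp he hpn hen hpe ⟨r, a, b, d⟩ =
      (r : ℍ) + a • p + b • e + d • (p * e) := by
  show (liftH p e hp he hpn hen hpe) ⟨r, a, b, d⟩ = _
  show algebraMap ℝ ℍ r + a • p + b • e + d • (p * e) = _
  rfl

lemma exists_orth (q : ℍ) (hq : q.re = 0) (hqn : ‖q‖ = 1) :
    ∃ e : ℍ, e.re = 0 ∧ ‖e‖ = 1 ∧ (inner ℝ q e : ℝ) = 0 := by
  by_cases h : q.imI = 0 ∧ q.imJ = 0
  · refine ⟨⟨0, 1, 0, 0⟩, rfl, norm_eq_one _ (by norm_num), ?_⟩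
    erw [inner_comp]; simp [h.1]
  · have hr2 : q.imI^2 + q.imJ^2 > 0 := by
      rcases (not_and_or.mp h) with h | h <;> positivity
    set r : ℝ := Real.sqrt (q.imI^2 + q.imJ^2) with hr
    have hrpos : 0 < r := Real.sqrt_pos.mpr hr2
    have hrsq : r^2 = q.imI^2 + q.imJ^2 := Real.sq_sqrt hr2.le
    refine ⟨⟨0, q.imJ / r, -q.imI / r, 0⟩, rfl, norm_eq_one _ ?_, ?_⟩
    · field_simp
      linarith [hrsq]
    · erw [inner_comp]; simp; ring

set_option linter.unusedVariables false in
lemma decompose (u q : ℍ) (hq : q.re = 0) (hqn : ‖q‖ = 1) (c s : ℝ)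
    (hc : (inner ℝ u.im q : ℝ) = c) (hs : ‖u.im - c • q‖ = s) :
    ∃ e : ℍ, e.re = 0 ∧ ‖e‖ = 1 ∧ (inner ℝ q e : ℝ) = 0 ∧ u.im = c • q + s • e := by
  rcases eq_or_ne s 0 with h0 | h0
  · obtain ⟨e, h1, h2, h3⟩ := exists_orth q hq hqn
    have : u.im - c • q = 0 := by rwa [← norm_eq_zero, hs]
    refine ⟨e, h1, h2, h3, ?_⟩
    rw [h0]
    simpa [sub_eq_zero] using this
  · refine ⟨s⁻¹ • (u.im - c • q), ?_, ?_, ?_, ?_⟩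
    · simp [hq]
    · rw [norm_smul, hs, Real.norm_eq_abs, abs_inv]
      have : s ≥ 0 := hs ▸ norm_nonneg _
      rw [abs_of_nonneg this]
      field_simp
    · have h1 : (inner ℝ q u.im : ℝ) = c := by rw [real_inner_comm]; exact hc
      have h2 : (inner ℝ q q : ℝ) = 1 := by
        rw [real_inner_self_eq_norm_sq, hqn]; norm_num
      rw [real_inner_smul_right, inner_sub_right, real_inner_smul_right, h1, h2]
      ring
    · rw [smul_smul]
      field_simp; simp

end Stmt14Aux

end

set_option maxHeartbeats 1000000 in
open Stmt14Aux in
theorem stmt_14 (u₁ u₂ q₁ q₂ : ℍ)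
    (hq₁ : q₁.re = 0) (hq₂ : q₂.re = 0) (hq₁n : ‖q₁‖ = 1) (hq₂n : ‖q₂‖ = 1)
    (hn : ‖u₁‖ = ‖u₂‖) (hre : u₁.re = u₂.re)
    (hinner : (inner ℝ u₁.im q₁ : ℝ) = inner ℝ u₂.im q₂) :
    ∃ g : ℍ ≃ₐ[ℝ] ℍ, g u₁ = u₂ ∧ g q₁ = q₂ := by
  set c : ℝ := inner ℝ u₁.im q₁ with hc
  set s : ℝ := ‖u₁.im - c • q₁‖ with hs
  -- the two "w" norms agree
  have hw : ‖u₂.im - c • q₂‖ = s := by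
    have e1 : ‖u₁.im - c • q₁‖^2 = ‖u₁.im‖^2 - 2*c*c + c^2 := by
      rw [norm_sub_sq_real, real_inner_smul_right, norm_smul, ← hc]
      simp [hq₁n]
      ring
    have e2 : ‖u₂.im - c • q₂‖^2 = ‖u₂.im‖^2 - 2*c*c + c^2 := by
      rw [norm_sub_sq_real, real_inner_smul_right, norm_smul, ← hinner]
      simp [hq₂n]
      ring
    have n1 : ‖u₁.im‖^2 = ‖u₁‖^2 - u₁.re^2 := by
      have h1 : normSq u₁ = ‖u₁‖ * ‖u₁‖ := normSq_eq_norm_mul_self u₁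
      have h2 : normSq u₁.im = ‖u₁.im‖ * ‖u₁.im‖ := normSq_eq_norm_mul_self u₁.im
      rw [Quaternion.normSq_def'] at h1 h2
      simp at h2
      nlinarith
    have n2 : ‖u₂.im‖^2 = ‖u₂‖^2 - u₂.re^2 := by
      have h1 : normSq u₂ = ‖u₂‖ * ‖u₂‖ := normSq_eq_norm_mul_self u₂
      have h2 : normSq u₂.im = ‖u₂.im‖ * ‖u₂.im‖ := normSq_eq_norm_mul_self u₂.im
      rw [Quaternion.normSq_def'] at h1 h2
      simp at h2
      nlinarith
    have : ‖u₂.im - c • q₂‖^2 = s^2 := by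
      rw [e2, n2, ← hn, ← hre, ← n1, hs, e1]
    nlinarith [norm_nonneg (u₂.im - c • q₂), hs ▸ norm_nonneg (u₁.im - c • q₁)]
  obtain ⟨e₁, he₁r, he₁n, he₁o, hd₁⟩ := decompose u₁ q₁ hq₁ hq₁n c s rfl rfl
  obtain ⟨e₂, he₂r, he₂n, he₂o, hd₂⟩ := decompose u₂ q₂ hq₂ hq₂n c s hinner.symm hw
  set A₁ := autOf q₁ e₁ hq₁ he₁r hq₁n he₁n he₁o with hA₁
  set A₂ := autOf q₂ e₂ hq₂ he₂r hq₂n he₂n he₂o with hA₂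
  refine ⟨A₁.symm.trans A₂, ?_, ?_⟩
  · have h1 : A₁ ⟨u₁.re, c, s, 0⟩ = u₁ := by
      rw [hA₁, autOf_mk]
      rw [zero_smul, add_zero, add_assoc, ← hd₁, Quaternion.re_add_im]
    have h2 : A₂ ⟨u₁.re, c, s, 0⟩ = u₂ := by
      rw [hA₂, autOf_mk]
      rw [zero_smul, add_zero, add_assoc, ← hd₂, hre, Quaternion.re_add_im]
    simp only [AlgEquiv.trans_apply]
    erw [← h1, AlgEquiv.symm_apply_apply, h2]
  · have h1 : A₁ ⟨0, 1, 0, 0⟩ = q₁ := by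
      rw [hA₁, autOf_mk]; simp
    have h2 : A₂ ⟨0, 1, 0, 0⟩ = q₂ := by
      rw [hA₂, autOf_mk]; simp
    simp only [AlgEquiv.trans_apply]
    erw [← h1, AlgEquiv.symm_apply_apply, h2]
end

section
/- Let Q_k be defined on U₁ = {(u,q) ∈ ℍ × S³ : Re q = 0} by Q_k(u,q) = φ(u)·(|u|, Re(uq), φ(u)⟨Im(uq), Im q⟩) where φ(u) = 1/√(1+|u|²). Then for u ≠ 0 and h ∈ ℤ, with v = u/|u|² and r = (u/|u|)ʰ q (u/|u|)^{−(h−1)}, one has φ(v)·(|r|, Re r, φ(v)⟨Im r, Im(v̄ r)⟩) = Q_k(u,q). -/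
open Quaternion

lemma inner_im_eq (a b : ℍ) : (inner ℝ a.im b.im : ℝ) = (a * star b).re - a.re * b.re := by
  simp [Quaternion.inner_def, Quaternion.re_mul]; ring

theorem stmt_18 (φ : ℍ → ℝ) (hφ : ∀ u, φ u = 1 / Real.sqrt (1 + ‖u‖ ^ 2))
    (u q : ℍ) (hu : u ≠ 0) (hq : q.re = 0) (hq1 : ‖q‖ = 1) (h : ℤ)
    (v r : ℍ) (hv : v = (‖u‖ ^ 2)⁻¹ • u)
    (hr : r = (‖u‖⁻¹ • u) ^ h * q * (‖u‖⁻¹ • u) ^ (-(h - 1))) :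
    (φ v * ‖r‖, φ v * r.re, φ v * (φ v * (inner ℝ r.im (star v * r).im : ℝ))) =
    (φ u * ‖u‖, φ u * (u * q).re, φ u * (φ u * (inner ℝ (u * q).im q.im : ℝ))) := by
  have hn : (0:ℝ) < ‖u‖ := norm_pos_iff.mpr hu
  have hn0 : ‖u‖ ≠ 0 := hn.ne'
  set w : ℍ := ‖u‖⁻¹ • u with hw_def
  have hw1 : ‖w‖ = 1 := by
    rw [hw_def, norm_smul, norm_inv, norm_norm, inv_mul_cancel₀ hn0]
  have hw0 : w ≠ 0 := by
    intro h0; rw [h0, norm_zero] at hw1; exact one_ne_zero hw1.symm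
  -- q * q = -1
  have hsq : star q = -q := by
    ext <;> simp [hq]
  have hqq : q * q = -1 := by
    have : q * star q = ((normSq q : ℝ) : ℍ) := Quaternion.self_mul_star q
    rw [hsq, mul_neg] at this
    have h2 : normSq q = 1 := by
      rw [Quaternion.normSq_eq_norm_mul_self, hq1, one_mul]
    rw [h2] at this
    have := neg_eq_iff_eq_neg.mp this
    simpa using this
  -- norm of r
  have hnr : ‖r‖ = 1 := by
    rw [hr, norm_mul, norm_mul, norm_zpow, norm_zpow, hw1, hq1]
    simp
  -- r.re
  have hwpow : w ^ (-(h-1)) * w ^ h = w := by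
    rw [← zpow_add₀ hw0]; ring_nf; exact zpow_one w
  have hr_re : r.re = ‖u‖⁻¹ * (u * q).re := by
    rw [hr, re_mul_comm, ← mul_assoc, hwpow, hw_def, smul_mul_assoc]
    simp
  -- star v * r
  have hvw : v = ‖u‖⁻¹ • w := by
    rw [hv, hw_def, smul_smul]; congr 1; rw [sq]; rw [mul_inv]
  have hswinv : star w = w⁻¹ := by
    have h1 : w * star w = 1 := by
      rw [Quaternion.self_mul_star, Quaternion.normSq_eq_norm_mul_self, hw1]
      simp
    exact eq_inv_of_mul_eq_one_right h1
  have hsvr : star v * r = ‖u‖⁻¹ • (w ^ (h-1) * q * w ^ (-(h-1))) := by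
    rw [hvw, hr, Quaternion.star_smul, hswinv, smul_mul_assoc]
    congr 1
    rw [← mul_assoc, ← mul_assoc, ← zpow_neg_one, ← zpow_add₀ hw0]
    congr 2
    ring
  have hsvr_re : (star v * r).re = 0 := by
    rw [hsvr, Quaternion.re_smul, re_mul_comm, ← mul_assoc, ← zpow_add₀ hw0]
    simp [hq]
  -- r * star (star v * r) = v
  have hrsr : r * star (star v * r) = v := by
    rw [star_mul, star_star, ← mul_assoc, Quaternion.self_mul_star,
      Quaternion.normSq_eq_norm_mul_self, hnr]
    simp
  -- inner parts
  have hinL : (inner ℝ r.im (star v * r).im : ℝ) = v.re := by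
    rw [inner_im_eq, hrsr, hsvr_re, mul_zero, sub_zero]
  have hinR : (inner ℝ (u*q).im q.im : ℝ) = u.re := by
    rw [inner_im_eq, hsq, mul_neg, mul_assoc, hqq, hq, mul_zero, sub_zero]
    simp
  -- φ v = φ u * ‖u‖
  have hφv : φ v = φ u * ‖u‖ := by
    rw [hφ, hφ, hvw, norm_smul, hw1, mul_one, norm_inv, norm_norm]
    rw [show (1 : ℝ) + (‖u‖⁻¹)^2 = (1 + ‖u‖^2) * (‖u‖⁻¹)^2 by field_simp; ring]
    rw [Real.sqrt_mul (by positivity), Real.sqrt_sq (by positivity)]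
    field_simp
  have hvre : v.re = (‖u‖^2)⁻¹ * u.re := by rw [hv]; simp
  refine Prod.ext ?_ (Prod.ext ?_ ?_)
  · simp only [hφv, hnr]; ring
  · simp only [hφv, hr_re]; field_simp
  · simp only [hφv, hinL, hinR, hvre]
    field_simp
end
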